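/- Let p ∈ (0,1) and Δ ∈ (0, 1 − p). Then ∫_{Δ}^{1−p} 1 / kl(p, p + x) dx ≤ (Δ / kl(p, p + Δ)) · log(1/Δ). -/

import Mathlib

/-- The Kullback–Leibler divergence between Bernoulli distributions with means `p`, `q`:
`kl(p, q) = p·log(p/q) + (1−p)·log((1−p)/(1−q))`. -/
noncomputable def klBer (p q : ℝ) : ℝ :=
  p * Real.log (p / q) + (1 - p) * Real.log ((1 - p) / (1 - q))

open Real Set MeasureTheory

lemma klBer_pos {p q : ℝ} (hp : p ∈ Set.Ioo (0:ℝ) 1) (hq : q ∈ Set.Ioo (0:ℝ) 1)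
    (hne : p ≠ q) : 0 < klBer p q := by
  obtain ⟨hp0, hp1⟩ := hp
  obtain ⟨hq0, hq1⟩ := hq
  have hq1' : (0:ℝ) < 1 - q := by linarith
  have hp1' : (0:ℝ) < 1 - p := by linarith
  have h1 : Real.log (q / p) < q / p - 1 := by
    apply Real.log_lt_sub_one_of_pos (by positivity)
    intro h
    rw [div_eq_one_iff_eq (ne_of_gt hp0)] at h
    exact hne h.symm
  have h2 : Real.log ((1 - q) / (1 - p)) ≤ (1 - q) / (1 - p) - 1 :=
    Real.log_le_sub_one_of_pos (by positivity)
  have e1 : Real.log (p / q) = - Real.log (q / p) := by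
    rw [Real.log_div (ne_of_gt hp0) (ne_of_gt hq0),
      Real.log_div (ne_of_gt hq0) (ne_of_gt hp0)]
    ring
  have e2 : Real.log ((1 - p) / (1 - q)) = - Real.log ((1 - q) / (1 - p)) := by
    rw [Real.log_div (ne_of_gt hp1') (ne_of_gt hq1'),
      Real.log_div (ne_of_gt hq1') (ne_of_gt hp1')]
    ring
  rw [klBer, e1, e2]
  have hd1 : p * (q / p - 1) = q - p := by field_simp
  have hd2 : (1 - p) * ((1 - q) / (1 - p) - 1) = p - q := by
    field_simp
    ring
  nlinarith [mul_lt_mul_of_pos_left h1 hp0,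
    mul_le_mul_of_nonneg_left h2 (le_of_lt hp1')]

lemma klBer_eq {p : ℝ} (hp : p ∈ Set.Ioo (0:ℝ) 1) {t : ℝ} (ht0 : 0 ≤ t) (ht1 : t < 1 - p) :
    klBer p (p + t) = (p * Real.log p + (1 - p) * Real.log (1 - p)) +
      (-(p * Real.log (p + t)) + -((1 - p) * Real.log (1 - p - t))) := by
  obtain ⟨hp0, hp1⟩ := hp
  have h1 : (1:ℝ) - (p + t) = 1 - p - t := by ring
  rw [klBer, h1, Real.log_div (ne_of_gt hp0) (by positivity),
    Real.log_div (by intro h; linarith [h, ht1] : (1:ℝ) - p ≠ 0)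
      (by intro h; linarith [h] : (1:ℝ) - p - t ≠ 0)]
  ring

lemma klBer_convex {p : ℝ} (hp : p ∈ Set.Ioo (0:ℝ) 1) :
    ConvexOn ℝ (Set.Ico (0:ℝ) (1 - p))
      (fun x => (p * Real.log p + (1 - p) * Real.log (1 - p)) +
        (-(p * Real.log (p + x)) + -((1 - p) * Real.log (1 - p - x)))) := by
  obtain ⟨hp0, hp1⟩ := hp
  have hneg : ConvexOn ℝ (Set.Ioi (0:ℝ)) (fun y => -Real.log y) :=
    strictConcaveOn_log_Ioi.concaveOn.neg
  have h1 : ConvexOn ℝ (Set.Ico (0:ℝ) (1 - p)) (fun x => -(p * Real.log (p + x))) := by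
    have := (hneg.comp_affineMap (AffineMap.lineMap (p : ℝ) (p + 1))).smul (le_of_lt hp0)
    have heq : (fun x => p • ((fun y => -Real.log y) ∘ (AffineMap.lineMap (p:ℝ) (p+1))) x)
        = fun x => -(p * Real.log (p + x)) := by
      funext x
      simp only [Function.comp_apply, AffineMap.lineMap_apply, smul_eq_mul,
        vsub_eq_sub, vadd_eq_add]
      ring_nf
    rw [heq] at this
    refine this.subset ?_ (convex_Ico _ _)
    intro x hx
    simp only [Set.mem_preimage, AffineMap.lineMap_apply, Set.mem_Ioi,
      vsub_eq_sub, vadd_eq_add, smul_eq_mul]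
    simp only [Set.mem_Ico] at hx
    nlinarith [hx.1]
  have h2 : ConvexOn ℝ (Set.Ico (0:ℝ) (1 - p)) (fun x => -((1 - p) * Real.log (1 - p - x))) := by
    have := (hneg.comp_affineMap (AffineMap.lineMap ((1 - p) : ℝ) (-p))).smul
      (by linarith : (0:ℝ) ≤ 1 - p)
    have heq : (fun x => (1 - p) • ((fun y => -Real.log y) ∘ (AffineMap.lineMap ((1-p):ℝ) (-p))) x)
        = fun x => -((1 - p) * Real.log (1 - p - x)) := by
      funext x
      simp only [Function.comp_apply, AffineMap.lineMap_apply, smul_eq_mul,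
        vsub_eq_sub, vadd_eq_add]
      ring_nf
    rw [heq] at this
    refine this.subset ?_ (convex_Ico _ _)
    intro x hx
    simp only [Set.mem_preimage, AffineMap.lineMap_apply, Set.mem_Ioi,
      vsub_eq_sub, vadd_eq_add, smul_eq_mul]
    simp only [Set.mem_Ico] at hx
    nlinarith [hx.2]
  exact (convexOn_const (p * Real.log p + (1 - p) * Real.log (1 - p))
      (convex_Ico (0:ℝ) (1 - p))).add (h1.add h2)

lemma klBer_slope {p Δ : ℝ} (hp : p ∈ Set.Ioo (0:ℝ) 1) (hΔ : 0 < Δ) (hΔp : Δ < 1 - p)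
    {x : ℝ} (hx1 : Δ ≤ x) (hx2 : x < 1 - p) :
    klBer p (p + Δ) ≤ (Δ / x) * klBer p (p + x) := by
  set G := fun x => (p * Real.log p + (1 - p) * Real.log (1 - p)) +
        (-(p * Real.log (p + x)) + -((1 - p) * Real.log (1 - p - x))) with hG
  have hconv := klBer_convex hp
  have hx0 : 0 < x := lt_of_lt_of_le hΔ hx1
  have hmem0 : (0:ℝ) ∈ Set.Ico (0:ℝ) (1 - p) := ⟨le_refl _, by linarith⟩
  have hmemx : x ∈ Set.Ico (0:ℝ) (1 - p) := ⟨le_of_lt hx0, hx2⟩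
  have ha : (0:ℝ) ≤ 1 - Δ / x := by
    have : Δ / x ≤ 1 := by rw [div_le_one hx0]; exact hx1
    linarith
  have hb : (0:ℝ) ≤ Δ / x := by positivity
  have hab : (1 - Δ / x) + Δ / x = 1 := by ring
  have key := hconv.2 hmem0 hmemx ha hb hab
  have harg : (1 - Δ / x) • (0:ℝ) + (Δ / x) • x = Δ := by
    simp only [smul_eq_mul, mul_zero, zero_add]
    field_simp
  rw [harg] at key
  have hG0 : G 0 = 0 := by
    simp only [hG, add_zero, sub_zero]
    ring
  have eΔ : klBer p (p + Δ) = G Δ := klBer_eq hp (le_of_lt hΔ) hΔp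
  have ex : klBer p (p + x) = G x := klBer_eq hp (le_of_lt hx0) hx2
  rw [eΔ, ex]
  calc G Δ ≤ (1 - Δ / x) • G 0 + (Δ / x) • G x := key
    _ = (Δ / x) * G x := by rw [hG0]; simp [smul_eq_mul]

/-- for `p ∈ (0,1)` and `Δ ∈ (0, 1 − p)`,
`∫_{Δ}^{1−p} 1 / kl(p, p + x) dx ≤ (Δ / kl(p, p + Δ)) · log(1/Δ)`. -/
theorem integral_inv_klBer_le (p Δ : ℝ) (hp : p ∈ Set.Ioo (0 : ℝ) 1)
    (hΔ : 0 < Δ) (hΔp : Δ < 1 - p) :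
    (∫ x in Δ..(1 - p), 1 / klBer p (p + x)) ≤
      Δ / klBer p (p + Δ) * Real.log (1 / Δ) := by
  obtain ⟨hp0, hp1⟩ := hp
  have hp' : p ∈ Set.Ioo (0:ℝ) 1 := ⟨hp0, hp1⟩
  have hklΔ : 0 < klBer p (p + Δ) :=
    klBer_pos hp' ⟨by linarith, by linarith⟩ (ne_of_lt (by linarith))
  have hble : Δ ≤ 1 - p := le_of_lt hΔp
  -- pointwise bound on Icc
  have hbound : ∀ x ∈ Set.Icc Δ (1 - p),
      1 / klBer p (p + x) ≤ Δ / klBer p (p + Δ) * x⁻¹ := by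
    intro x hx
    obtain ⟨hx1, hx2⟩ := hx
    have hx0 : 0 < x := lt_of_lt_of_le hΔ hx1
    rcases lt_or_eq_of_le hx2 with hlt | heq
    · have hslope := klBer_slope hp' hΔ hΔp hx1 hlt
      have hklx : 0 < klBer p (p + x) := by
        have : 0 < Δ / x := div_pos hΔ hx0
        nlinarith
      have h2 : klBer p (p + Δ) * x ≤ Δ * klBer p (p + x) := by
        have hm := mul_le_mul_of_nonneg_right hslope (le_of_lt hx0)
        have e : Δ / x * klBer p (p + x) * x = Δ * klBer p (p + x) := by
          field_simp
        linarith [e ▸ hm]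
      have e2 : Δ / klBer p (p + Δ) * x⁻¹ = Δ / (klBer p (p + Δ) * x) := by
        rw [← div_eq_mul_inv, div_div]
      rw [e2, one_div, ← one_div, div_le_div_iff₀ hklx (by positivity)]
      linarith
    · -- x = 1 - p : klBer p 1 = p * log p < 0
      have hkl1 : klBer p (p + x) = p * Real.log p := by
        rw [heq]
        simp only [klBer]
        have : (1:ℝ) - (p + (1 - p)) = 0 := by ring
        rw [show p + (1 - p) = (1:ℝ) by ring]
        simp
      rw [hkl1]
      have hlogp : Real.log p < 0 := Real.log_neg hp0 hp1
      have hlhs : 1 / (p * Real.log p) < 0 := by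
        apply div_neg_of_pos_of_neg one_pos
        exact mul_neg_of_pos_of_neg hp0 hlogp
      have hrhs : 0 < Δ / klBer p (p + Δ) * x⁻¹ := by positivity
      linarith
  -- measurability
  have hmeas : Measurable fun x : ℝ => 1 / klBer p (p + x) := by
    have m1 : Measurable fun x : ℝ => Real.log (p / (p + x)) :=
      Real.measurable_log.comp (measurable_const.div (measurable_const.add measurable_id))
    have m2 : Measurable fun x : ℝ => Real.log ((1 - p) / (1 - (p + x))) :=
      Real.measurable_log.comp
        (measurable_const.div (measurable_const.sub (measurable_const.add measurable_id)))
    exact measurable_const.div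
      ((measurable_const.mul m1).add (measurable_const.mul m2))
  -- pointwise bound implies boundedness for integrability
  set C : ℝ := max (klBer p (p + Δ))⁻¹ |1 / (p * Real.log p)| with hC
  have hCbound : ∀ x ∈ Set.Icc Δ (1 - p), ‖1 / klBer p (p + x)‖ ≤ C := by
    intro x hx
    obtain ⟨hx1, hx2⟩ := hx
    have hx0 : 0 < x := lt_of_lt_of_le hΔ hx1
    rcases lt_or_eq_of_le hx2 with hlt | heq
    · have hslope := klBer_slope hp' hΔ hΔp hx1 hlt
      have hdx1 : Δ / x ≤ 1 := by rw [div_le_one hx0]; exact hx1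
      have hklx : klBer p (p + Δ) ≤ klBer p (p + x) := by
        nlinarith [div_pos hΔ hx0]
      have hklxpos : 0 < klBer p (p + x) := lt_of_lt_of_le hklΔ hklx
      rw [Real.norm_eq_abs, abs_of_pos (by positivity)]
      refine le_trans ?_ (le_max_left _ _)
      rw [one_div]
      exact inv_anti₀ hklΔ hklx
    · have hkl1 : klBer p (p + x) = p * Real.log p := by
        rw [heq, show p + (1 - p) = (1:ℝ) by ring]
        simp [klBer]
      rw [hkl1, Real.norm_eq_abs]
      exact le_max_right _ _
  have hfint : IntervalIntegrable (fun x => 1 / klBer p (p + x)) volume Δ (1 - p) := by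
    rw [intervalIntegrable_iff_integrableOn_Ioc_of_le hble]
    apply Integrable.mono' (g := fun _ => C)
    · exact integrableOn_const measure_Ioc_lt_top.ne
    · exact hmeas.aestronglyMeasurable.restrict
    · refine (ae_restrict_iff' measurableSet_Ioc).2 (ae_of_all _ fun x hx => ?_)
      exact hCbound x ⟨le_of_lt hx.1, hx.2⟩
  -- integrability of g
  have hgint : IntervalIntegrable (fun x => Δ / klBer p (p + Δ) * x⁻¹) volume Δ (1 - p) := by
    apply ContinuousOn.intervalIntegrable
    apply ContinuousOn.mul continuousOn_const
    apply ContinuousOn.inv₀ continuousOn_id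
    intro x hx
    rw [Set.uIcc_of_le hble] at hx
    exact ne_of_gt (lt_of_lt_of_le hΔ hx.1)
  have hmono := intervalIntegral.integral_mono_on hble hfint hgint hbound
  have hcalc : (∫ x in Δ..(1 - p), Δ / klBer p (p + Δ) * x⁻¹)
      = Δ / klBer p (p + Δ) * Real.log ((1 - p) / Δ) := by
    rw [intervalIntegral.integral_const_mul, integral_inv_of_pos hΔ (by linarith)]
  have hlog : Real.log ((1 - p) / Δ) ≤ Real.log (1 / Δ) := by
    apply Real.log_le_log (div_pos (by linarith) hΔ)
    gcongr
    linarith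
  have hc : 0 ≤ Δ / klBer p (p + Δ) := by positivity
  calc (∫ x in Δ..(1 - p), 1 / klBer p (p + x))
      ≤ ∫ x in Δ..(1 - p), Δ / klBer p (p + Δ) * x⁻¹ := hmono
    _ = Δ / klBer p (p + Δ) * Real.log ((1 - p) / Δ) := hcalc
    _ ≤ Δ / klBer p (p + Δ) * Real.log (1 / Δ) := mul_le_mul_of_nonneg_left hlog hc
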